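/- Let (K,|·|) be a normed field, f ∈ K[z] a polynomial of degree n ≥ 2 having n simple zeros in K, ξ ∈ Kⁿ a root-vector of f (so ξ has pairwise distinct components), x ∈ Kⁿ, and 1 ≤ p ≤ ∞ with conjugate exponent q. Set E(x) = ‖(x − ξ)/d(ξ)‖_p. Then for all i ≠ j, |x_i − x_j| ≥ (1 − 2^{1/q} E(x)) · d_j(ξ) and |x_i − ξ_j| ≥ (1 − E(x)) · d_i(ξ). -/

import Mathlib

open Finset Filter Topology
open scoped ENNReal

noncomputable def pnorm {n : ℕ} (p : ℝ≥0∞) (v : Fin n → ℝ) : ℝ :=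
  if p = ⊤ then ⨆ i, |v i| else (∑ i, |v i| ^ p.toReal) ^ (1 / p.toReal)

noncomputable def epow (a : ℝ) (p : ℝ≥0∞) : ℝ :=
  if p = ⊤ then 1 else a ^ (1 / p.toReal)

noncomputable def dsep {K : Type*} [NormedField K] {n : ℕ} (x : Fin n → K) (i : Fin n) : ℝ :=
  sInf {r : ℝ | ∃ j, j ≠ i ∧ r = ‖x i - x j‖}

noncomputable def Wcorr {K : Type*} [NormedField K] {n : ℕ} (f : Polynomial K)
    (x : Fin n → K) (i : Fin n) : K :=
  Polynomial.eval (x i) f / (f.leadingCoeff * ∏ j ∈ Finset.univ.erase i, (x i - x j))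

def IsRootVector {K : Type*} [NormedField K] {n : ℕ} (f : Polynomial K) (ξ : Fin n → K) : Prop :=
  ∀ z : K, Polynomial.eval z f = f.leadingCoeff * ∏ i, (z - ξ i)

section Aux

variable {K : Type*} [NormedField K] {n : ℕ}

private lemma dsep_finite (ξ : Fin n → K) (i : Fin n) :
    {r : ℝ | ∃ j, j ≠ i ∧ r = ‖ξ i - ξ j‖}.Finite := by
  have : {r : ℝ | ∃ j, j ≠ i ∧ r = ‖ξ i - ξ j‖} = (fun j => ‖ξ i - ξ j‖) '' {j | j ≠ i} := by
    ext r
    constructor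
    · rintro ⟨j, hj, rfl⟩; exact ⟨j, hj, rfl⟩
    · rintro ⟨j, hj, rfl⟩; exact ⟨j, hj, rfl⟩
  rw [this]
  exact (Set.toFinite _).image _

private lemma dsep_le' (ξ : Fin n → K) {i j : Fin n} (h : j ≠ i) : dsep ξ i ≤ ‖ξ i - ξ j‖ :=
  csInf_le (dsep_finite ξ i).bddBelow ⟨j, h, rfl⟩

private lemma dsep_exists (hn : 2 ≤ n) (ξ : Fin n → K) (i : Fin n) :
    ∃ j, j ≠ i ∧ dsep ξ i = ‖ξ i - ξ j‖ := by
  have hne : {r : ℝ | ∃ j, j ≠ i ∧ r = ‖ξ i - ξ j‖}.Nonempty := by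
    obtain ⟨j, hj⟩ := Fintype.exists_ne_of_one_lt_card (by simp; omega) i
    exact ⟨_, j, hj, rfl⟩
  exact hne.csInf_mem (dsep_finite ξ i)

private lemma dsep_pos (hn : 2 ≤ n) {ξ : Fin n → K} (hξ : Function.Injective ξ) (i : Fin n) :
    0 < dsep ξ i := by
  obtain ⟨j, hj, he⟩ := dsep_exists hn ξ i
  rw [he]
  exact norm_pos_iff.mpr (sub_ne_zero.mpr fun h => hj (hξ h).symm)

private lemma le_pnorm {p : ℝ≥0∞} (hp : 1 ≤ p) (v : Fin n → ℝ) (hv : ∀ k, 0 ≤ v k)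
    (k : Fin n) : v k ≤ pnorm p v := by
  unfold pnorm
  split_ifs with hT
  · calc v k = |v k| := (abs_of_nonneg (hv k)).symm
      _ ≤ ⨆ i, |v i| := le_ciSup (f := fun i => |v i|) (Set.Finite.bddAbove (Set.finite_range _)) k
  · have ht : 1 ≤ p.toReal := by
      rw [← ENNReal.toReal_one]
      exact ENNReal.toReal_mono hT hp
    have ht0 : p.toReal ≠ 0 := by linarith
    have h1 : v k ^ p.toReal ≤ ∑ i, |v i| ^ p.toReal := by
      rw [← abs_of_nonneg (hv k)]
      exact Finset.single_le_sum (fun i _ => Real.rpow_nonneg (abs_nonneg _) _) (mem_univ k)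
    calc v k = (v k ^ p.toReal) ^ (1 / p.toReal) := by
          rw [one_div, Real.rpow_rpow_inv (hv k) ht0]
      _ ≤ (∑ i, |v i| ^ p.toReal) ^ (1 / p.toReal) :=
          Real.rpow_le_rpow (Real.rpow_nonneg (hv k) _) h1 (by positivity)

private lemma two_rpow_ineq {a b t : ℝ} (ha : 0 ≤ a) (hb : 0 ≤ b) (ht : 1 ≤ t) :
    a + b ≤ 2 ^ (1 - 1/t) * (a ^ t + b ^ t) ^ (1/t) := by
  have ht0 : t ≠ 0 := by linarith
  have h := NNReal.rpow_add_le_mul_rpow_add_rpow ⟨a, ha⟩ ⟨b, hb⟩ ht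
  have hR : (a + b) ^ t ≤ 2 ^ (t - 1) * (a ^ t + b ^ t) := by exact_mod_cast h
  have h2 : ((a + b) ^ t) ^ (1/t) ≤ (2 ^ (t - 1) * (a ^ t + b ^ t)) ^ (1/t) :=
    Real.rpow_le_rpow (Real.rpow_nonneg (by linarith) t) hR (by positivity)
  rw [one_div, Real.rpow_rpow_inv (by linarith) ht0] at h2
  calc a + b ≤ (2 ^ (t - 1) * (a ^ t + b ^ t)) ^ t⁻¹ := h2
    _ = 2 ^ (1 - 1/t) * (a ^ t + b ^ t) ^ (1/t) := by
        rw [Real.mul_rpow (by positivity) (by positivity), ← Real.rpow_mul (by norm_num), one_div]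
        congr 1
        field_simp

private lemma add_le_epow_mul_pnorm {p q : ℝ≥0∞} (hp : 1 ≤ p) (hpq : 1 / p + 1 / q = 1)
    (v : Fin n → ℝ) (hv : ∀ k, 0 ≤ v k) {i j : Fin n} (hij : i ≠ j) :
    v i + v j ≤ epow 2 q * pnorm p v := by
  have hp0 : p ≠ 0 := by
    intro h; rw [h] at hp; exact absurd hp (by simp)
  by_cases hT : p = ⊤
  · -- q = 1, epow 2 1 = 2, pnorm is sup
    have hq1 : q = 1 := by
      rw [hT] at hpq
      simp only [one_div, ENNReal.inv_top, zero_add] at hpq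
      exact ENNReal.inv_eq_one.mp hpq
    have he : epow 2 q = 2 := by
      rw [hq1]
      simp [epow]
    rw [he]
    have h1 := le_pnorm hp v hv i
    have h2 := le_pnorm hp v hv j
    linarith
  · have ht : 1 ≤ p.toReal := by
      rw [← ENNReal.toReal_one]
      exact ENNReal.toReal_mono hT hp
    set t := p.toReal with htdef
    have ht0 : t ≠ 0 := by linarith
    -- identify epow 2 q = 2 ^ (1 - 1/t)
    have he : epow 2 q = 2 ^ (1 - 1/t) := by
      by_cases hp1 : p = 1
      · have hq : q = ⊤ := by
          rw [hp1] at hpq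
          simp only [one_div, inv_one] at hpq
          have h0 : q⁻¹ = 0 :=
            (ENNReal.add_right_inj (a := 1) (by simp)).mp (by simpa using hpq)
          simpa using ENNReal.inv_eq_zero.mp h0
        have : t = 1 := by rw [htdef, hp1]; simp
        rw [hq, this]
        simp [epow]
      · have hq0 : q ≠ 0 := by
          intro h
          rw [h] at hpq
          simp at hpq
        have hqT : q ≠ ⊤ := by
          intro h
          rw [h] at hpq
          simp only [one_div, ENNReal.inv_top, add_zero] at hpq
          exact hp1 (by simpa using ENNReal.inv_eq_one.mp hpq)
        have hsum : 1/t + 1/q.toReal = 1 := by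
          have h1 : (1/p + 1/q).toReal = (1 : ℝ≥0∞).toReal := by rw [hpq]
          rw [ENNReal.toReal_add (by simp [hp0]) (by simp [hq0]), ENNReal.toReal_one] at h1
          simpa [one_div, ENNReal.toReal_inv] using h1
        unfold epow
        rw [if_neg hqT]
        congr 1
        linarith
    rw [he]
    -- main estimate
    have habs : ∀ k, |v k| = v k := fun k => abs_of_nonneg (hv k)
    have hsum2 : v i ^ t + v j ^ t ≤ ∑ k, |v k| ^ t := by
      have := Finset.sum_le_sum_of_subset_of_nonneg
        (Finset.subset_univ ({i, j} : Finset (Fin n)))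
        (fun k _ _ => Real.rpow_nonneg (abs_nonneg (v k)) t)
      rw [Finset.sum_pair hij] at this
      simpa [habs] using this
    have hp' : pnorm p v = (∑ k, |v k| ^ t) ^ (1/t) := by
      unfold pnorm
      rw [if_neg hT]
    calc v i + v j ≤ 2 ^ (1 - 1/t) * (v i ^ t + v j ^ t) ^ (1/t) :=
          two_rpow_ineq (hv i) (hv j) ht
      _ ≤ 2 ^ (1 - 1/t) * (∑ k, |v k| ^ t) ^ (1/t) := by
          apply mul_le_mul_of_nonneg_left _ (Real.rpow_pos_of_pos two_pos _).le
          exact Real.rpow_le_rpow (add_nonneg (Real.rpow_nonneg (hv i) t) (Real.rpow_nonneg (hv j) t)) hsum2 (by positivity)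
      _ = 2 ^ (1 - 1/t) * pnorm p v := by rw [hp']

private lemma epow_two_pos (q : ℝ≥0∞) : 0 < epow 2 q := by
  unfold epow
  split_ifs
  · norm_num
  · exact Real.rpow_pos_of_pos (by norm_num) _

end Aux

/-- If `f` has `n` simple zeros with root-vector `ξ`, then for all `i ≠ j`,
`|x_i − x_j| ≥ (1 − 2^{1/q} E(x)) d_j(ξ)` and `|x_i − ξ_j| ≥ (1 − E(x)) d_i(ξ)`,
where `E(x) = ‖(x − ξ)/d(ξ)‖_p`. -/
theorem weierstrass_first_kind_inequalities {K : Type*} [NormedField K] {n : ℕ} (hn : 2 ≤ n)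
    (f : Polynomial K) (hdeg : f.natDegree = n)
    (ξ : Fin n → K) (hroot : IsRootVector f ξ) (hξ : Function.Injective ξ)
    (x : Fin n → K) (p q : ℝ≥0∞) (hp : 1 ≤ p) (hpq : 1 / p + 1 / q = 1) :
    ∀ i j : Fin n, i ≠ j →
      (1 - epow 2 q * pnorm p (fun k => ‖x k - ξ k‖ / dsep ξ k)) * dsep ξ j ≤ ‖x i - x j‖ ∧
      (1 - pnorm p (fun k => ‖x k - ξ k‖ / dsep ξ k)) * dsep ξ i ≤ ‖x i - ξ j‖ := by
  intro i j hij
  set v : Fin n → ℝ := fun k => ‖x k - ξ k‖ / dsep ξ k with hvdef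
  have hdpos : ∀ k, 0 < dsep ξ k := dsep_pos hn hξ
  have hv : ∀ k, 0 ≤ v k := fun k => div_nonneg (norm_nonneg _) (hdpos k).le
  have hvd : ∀ k, ‖x k - ξ k‖ = v k * dsep ξ k := fun k =>
    (div_mul_cancel₀ _ (hdpos k).ne').symm
  set E := pnorm p v with hEdef
  have hE0 : 0 ≤ E := le_trans (hv i) (le_pnorm hp v hv i)
  have hviE : v i ≤ E := le_pnorm hp v hv i
  have hvjE : v j ≤ E := le_pnorm hp v hv j
  set B := ‖ξ i - ξ j‖ with hBdef
  have hB0 : 0 ≤ B := norm_nonneg _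
  have hdiB : dsep ξ i ≤ B := dsep_le' ξ (Ne.symm hij)
  have hdjB : dsep ξ j ≤ B := by
    rw [hBdef, norm_sub_rev]
    exact dsep_le' ξ hij
  constructor
  · -- first inequality
    set S := epow 2 q * E with hSdef
    have hS : v i + v j ≤ S := add_le_epow_mul_pnorm hp hpq v hv hij
    rcases le_or_gt (1 - S) 0 with h | h
    · calc (1 - S) * dsep ξ j ≤ 0 := mul_nonpos_of_nonpos_of_nonneg h (hdpos j).le
        _ ≤ ‖x i - x j‖ := norm_nonneg _
    · have htri : B ≤ v i * dsep ξ i + ‖x i - x j‖ + v j * dsep ξ j := by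
        calc B = ‖(ξ i - x i) + (x i - x j) + (x j - ξ j)‖ := by rw [hBdef]; ring_nf
          _ ≤ ‖ξ i - x i‖ + ‖x i - x j‖ + ‖x j - ξ j‖ :=
              le_trans (norm_add_le _ _) (by
                have := norm_add_le (ξ i - x i) (x i - x j)
                linarith)
          _ = v i * dsep ξ i + ‖x i - x j‖ + v j * dsep ξ j := by
              rw [norm_sub_rev (ξ i) (x i), hvd i, hvd j]
      have h1 : (1 - S) * (B - dsep ξ j) ≥ 0 := mul_nonneg h.le (by linarith)
      have h2 : (S - v i - v j) * B ≥ 0 := mul_nonneg (by linarith) hB0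
      have h3 : v i * (B - dsep ξ i) ≥ 0 := mul_nonneg (hv i) (by linarith)
      have h4 : v j * (B - dsep ξ j) ≥ 0 := mul_nonneg (hv j) (by linarith)
      nlinarith [htri, h1, h2, h3, h4]
  · -- second inequality
    rcases le_or_gt (1 - E) 0 with h | h
    · calc (1 - E) * dsep ξ i ≤ 0 := mul_nonpos_of_nonpos_of_nonneg h (hdpos i).le
        _ ≤ ‖x i - ξ j‖ := norm_nonneg _
    · have htri : B ≤ v i * dsep ξ i + ‖x i - ξ j‖ := by
        calc B = ‖(ξ i - x i) + (x i - ξ j)‖ := by rw [hBdef]; ring_nf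
          _ ≤ ‖ξ i - x i‖ + ‖x i - ξ j‖ := norm_add_le _ _
          _ = v i * dsep ξ i + ‖x i - ξ j‖ := by rw [norm_sub_rev (ξ i) (x i), hvd i]
      have h1 : (1 - E) * (B - dsep ξ i) ≥ 0 := mul_nonneg h.le (by linarith)
      have h2 : (E - v i) * B ≥ 0 := mul_nonneg (by linarith) hB0
      have h3 : v i * (B - dsep ξ i) ≥ 0 := mul_nonneg (hv i) (by linarith)
      nlinarith [htri, h1, h2, h3]
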